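/- Let V be a finite-dimensional complex inner product space, k, l ∈ ℕ, and a_j ∈ End_ℂ(V) for each integer −k ≤ j ≤ l. Let H be the bounded linear operator on the Hilbert space ℓ²(ℤ; V) defined by (H v)_n = ∑_{j=−k}^{l} a_j(v_{n−j}). Assume H is invertible as a bounded operator. Define the compression H♯ on ℓ²(ℤ_{≥0}; V) by (H♯ w)_n = ∑_{j=−k}^{l} a_j(w̃_{n−j}) for n ≥ 0, where w̃ is the extension of w to ℤ by zero on negative indices. Then the kernel of H♯ is finite-dimensional and the quotient of ℓ²(ℤ_{≥0}; V) by the range of H♯ is finite-dimensional; in particular H♯ is a Fredholm operator. -/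

import Mathlib

open scoped ENNReal

namespace CompressionFredholmAux

variable {V : Type} [NormedAddCommGroup V] [InnerProductSpace ℂ V]

lemma injNatInt : Function.Injective (fun n : ℕ => (n : ℤ)) := fun a b h => by simpa using h

lemma memE (w : lp (fun _ : ℕ => V) 2) :
    Memℓp (fun m : ℤ => if 0 ≤ m then (w : ∀ _ : ℕ, V) m.toNat else 0) 2 := by
  apply memℓp_gen
  refine (Function.Injective.summable_iff injNatInt ?_).mp ?_
  · intro m hm
    have : ¬ 0 ≤ m := fun h => hm ⟨m.toNat, by simp [Int.toNat_of_nonneg h]⟩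
    simp [this]
  · exact (lp.memℓp w).summable (by norm_num : 0 < (2:ℝ≥0∞).toReal)

lemma memP (u : lp (fun _ : ℤ => V) 2) :
    Memℓp (fun n : ℕ => (u : ∀ _ : ℤ, V) (n : ℤ)) 2 := by
  apply memℓp_gen
  exact ((lp.memℓp u).summable (by norm_num : 0 < (2:ℝ≥0∞).toReal)).comp_injective injNatInt

/-- extension by zero -/
noncomputable def E : lp (fun _ : ℕ => V) 2 →ₗ[ℂ] lp (fun _ : ℤ => V) 2 where
  toFun w := ⟨fun m => if 0 ≤ m then (w : ∀ _ : ℕ, V) m.toNat else 0, memE w⟩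
  map_add' w₁ w₂ := by
    apply lp.ext
    simp only [lp.coeFn_add]
    funext m
    by_cases h : 0 ≤ m <;> simp [h, lp.coeFn_add]
  map_smul' c w := by
    apply lp.ext
    simp only [lp.coeFn_smul]
    funext m
    by_cases h : 0 ≤ m <;> simp [h, lp.coeFn_smul]

/-- restriction -/
noncomputable def P : lp (fun _ : ℤ => V) 2 →ₗ[ℂ] lp (fun _ : ℕ => V) 2 where
  toFun u := ⟨fun n => (u : ∀ _ : ℤ, V) (n : ℤ), memP u⟩
  map_add' u₁ u₂ := by
    apply lp.ext
    simp only [lp.coeFn_add]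
    funext n
    simp [lp.coeFn_add]
  map_smul' c u := by
    apply lp.ext
    simp only [lp.coeFn_smul]
    funext n
    simp [lp.coeFn_smul]

@[simp] lemma E_apply (w : lp (fun _ : ℕ => V) 2) (m : ℤ) :
    ((E w : lp (fun _ : ℤ => V) 2) : ∀ _ : ℤ, V) m
      = if 0 ≤ m then (w : ∀ _ : ℕ, V) m.toNat else 0 := rfl

@[simp] lemma P_apply (u : lp (fun _ : ℤ => V) 2) (n : ℕ) :
    ((P u : lp (fun _ : ℕ => V) 2) : ∀ _ : ℕ, V) n = (u : ∀ _ : ℤ, V) (n : ℤ) := rfl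

/-- coordinate evaluation -/
noncomputable def ev (n : ℕ) : lp (fun _ : ℕ => V) 2 →ₗ[ℂ] V where
  toFun w := (w : ∀ _ : ℕ, V) n
  map_add' w₁ w₂ := by simp only [lp.coeFn_add, Pi.add_apply]
  map_smul' c w := by simp only [lp.coeFn_smul, Pi.smul_apply, RingHom.id_apply]

@[simp] lemma ev_apply (n : ℕ) (w : lp (fun _ : ℕ => V) 2) :
    ev n w = (w : ∀ _ : ℕ, V) n := rfl

end CompressionFredholmAux

open CompressionFredholmAux

/-- Let `H = ∑_{j=-k}^{l} a_j S^j` be an invertible bounded operator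
on `ℓ²(ℤ; V)` given by a finite sum of shifts with coefficients `a_j ∈ End ℂ V`, and
let `H♯ = P_{≥0} H P_{≥0}*` be its compression to `ℓ²(ℤ_{≥0}; V)`.  Then `H♯` has
finite-dimensional kernel and finite-dimensional cokernel; i.e. it is Fredholm. -/
theorem compression_of_invertible_laurent_operator_is_fredholm
    {V : Type} [NormedAddCommGroup V] [InnerProductSpace ℂ V] [FiniteDimensional ℂ V]
    (k l : ℕ) (a : ℤ → (V →L[ℂ] V))
    (H : lp (fun _ : ℤ => V) 2 →L[ℂ] lp (fun _ : ℤ => V) 2)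
    (hH : ∀ (u : lp (fun _ : ℤ => V) 2) (n : ℤ),
      (H u : ∀ _ : ℤ, V) n =
        ∑ j ∈ Finset.Icc (-(k : ℤ)) (l : ℤ), a j ((u : ∀ _ : ℤ, V) (n - j)))
    (hinv : IsUnit H)
    (Hs : lp (fun _ : ℕ => V) 2 →L[ℂ] lp (fun _ : ℕ => V) 2)
    (hHs : ∀ (w : lp (fun _ : ℕ => V) 2) (n : ℕ),
      (Hs w : ∀ _ : ℕ, V) n =
        ∑ j ∈ Finset.Icc (-(k : ℤ)) (l : ℤ),
          a j (if 0 ≤ (n : ℤ) - j then (w : ∀ _ : ℕ, V) ((n : ℤ) - j).toNat else 0)) :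
    FiniteDimensional ℂ (LinearMap.ker (Hs : lp (fun _ : ℕ => V) 2 →ₗ[ℂ] lp (fun _ : ℕ => V) 2)) ∧
    FiniteDimensional ℂ
      (lp (fun _ : ℕ => V) 2 ⧸
        LinearMap.range (Hs : lp (fun _ : ℕ => V) 2 →ₗ[ℂ] lp (fun _ : ℕ => V) 2)) := by
  obtain ⟨uH, huH⟩ := hinv
  -- the inverse of H
  set Hinv : lp (fun _ : ℤ => V) 2 →L[ℂ] lp (fun _ : ℤ => V) 2 := ↑uH⁻¹ with hHinv
  have hHinvH : ∀ x, Hinv (H x) = x := by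
    intro x
    have h1 : Hinv * H = 1 := by rw [hHinv, ← huH]; exact uH.inv_mul
    calc Hinv (H x) = (Hinv * H) x := rfl
    _ = x := by rw [h1]; rfl
  have hHHinv : ∀ x, H (Hinv x) = x := by
    intro x
    have h1 : H * Hinv = 1 := by rw [hHinv, ← huH]; exact uH.mul_inv
    calc H (Hinv x) = (H * Hinv) x := rfl
    _ = x := by rw [h1]; rfl
  have hHinj : Function.Injective H := by
    intro x y hxy
    have := congrArg Hinv hxy
    rwa [hHinvH, hHinvH] at this
  -- key computation: on nonnegative coordinates H ∘ E agrees with Hs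
  have keyA : ∀ (w : lp (fun _ : ℕ => V) 2) (n : ℕ),
      (H (E w) : ∀ _ : ℤ, V) (n : ℤ) = (Hs w : ∀ _ : ℕ, V) n := by
    intro w n
    rw [hH, hHs]
    refine Finset.sum_congr rfl fun j _ => ?_
    rw [E_apply]
  -- kernel part
  have hker : FiniteDimensional ℂ
      (LinearMap.ker (Hs : lp (fun _ : ℕ => V) 2 →ₗ[ℂ] lp (fun _ : ℕ => V) 2)) := by
    -- map a kernel element to the finitely many possibly-nonzero coordinates of H (E w)
    let κ : lp (fun _ : ℕ => V) 2 →ₗ[ℂ] (Fin k → V) :=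
      LinearMap.pi fun i =>
        { toFun := fun w => (H (E w) : ∀ _ : ℤ, V) (-(i : ℤ) - 1)
          map_add' := fun w₁ w₂ => by
            simp only [map_add, lp.coeFn_add, Pi.add_apply]
          map_smul' := fun c w => by
            simp only [map_smul, lp.coeFn_smul, Pi.smul_apply, RingHom.id_apply] }
    refine FiniteDimensional.of_injective
      (κ.comp (LinearMap.ker (Hs : lp (fun _ : ℕ => V) 2 →ₗ[ℂ] lp (fun _ : ℕ => V) 2)).subtype)
      ?_
    rw [← LinearMap.ker_eq_bot, LinearMap.ker_eq_bot']
    rintro ⟨w, hw⟩ hκ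
    rw [LinearMap.mem_ker] at hw
    have hw' : Hs w = 0 := hw
    have hHEw : H (E w) = 0 := by
      apply lp.ext
      funext m
      rw [lp.coeFn_zero, Pi.zero_apply]
      rcases le_or_gt 0 m with hm | hm
      · -- nonnegative coordinates: use keyA and the kernel hypothesis
        obtain ⟨n, rfl⟩ : ∃ n : ℕ, (n : ℤ) = m := ⟨m.toNat, Int.toNat_of_nonneg hm⟩
        rw [keyA, hw', lp.coeFn_zero, Pi.zero_apply]
      rcases le_or_gt (-(k : ℤ)) m with hm' | hm'
      · -- coordinates in [-k, -1] : killed by hκ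
        have hik : (-m - 1).toNat < k := by omega
        have h5 : (H (E w) : ∀ _ : ℤ, V) (-((((-m - 1).toNat : ℕ)) : ℤ) - 1) = 0 :=
          congrFun hκ ⟨(-m - 1).toNat, hik⟩
        rwa [show -((((-m - 1).toNat : ℕ)) : ℤ) - 1 = m by omega] at h5
      · -- coordinates below -k : every term of the sum vanishes
        rw [hH]
        refine Finset.sum_eq_zero fun j hj => ?_
        rw [Finset.mem_Icc] at hj
        have : ¬ 0 ≤ m - j := by omega
        rw [E_apply, if_neg this, map_zero]
    have hEw : E w = 0 := hHinj (by rw [hHEw, map_zero])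
    apply Subtype.ext
    apply lp.ext
    funext n
    have h6 : ((E w : lp (fun _ : ℤ => V) 2) : ∀ _ : ℤ, V) (n : ℤ) = 0 := by
      rw [hEw, lp.coeFn_zero, Pi.zero_apply]
    rw [E_apply] at h6
    simpa using h6
  -- cokernel part
  have hcoker : FiniteDimensional ℂ
      (lp (fun _ : ℕ => V) 2 ⧸
        LinearMap.range (Hs : lp (fun _ : ℕ => V) 2 →ₗ[ℂ] lp (fun _ : ℕ => V) 2)) := by
    -- the defect map
    let D : lp (fun _ : ℕ => V) 2 →ₗ[ℂ] lp (fun _ : ℕ => V) 2 :=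
      LinearMap.id - (Hs : lp (fun _ : ℕ => V) 2 →ₗ[ℂ] lp (fun _ : ℕ => V) 2).comp
        (P.comp ((Hinv : lp (fun _ : ℤ => V) 2 →ₗ[ℂ] lp (fun _ : ℤ => V) 2).comp E))
    let θ : lp (fun _ : ℕ => V) 2 →ₗ[ℂ] (Fin l → V) :=
      (LinearMap.pi fun i : Fin l => ev (i : ℕ)).comp D
    have hle : LinearMap.ker θ ≤
        LinearMap.range (Hs : lp (fun _ : ℕ => V) 2 →ₗ[ℂ] lp (fun _ : ℕ => V) 2) := by
      intro y hy
      rw [LinearMap.mem_ker] at hy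
      refine ⟨P (Hinv (E y)), ?_⟩
      show Hs (P (Hinv (E y))) = y
      apply lp.ext
      funext n
      rcases lt_or_ge n l with hn | hn
      · -- small coordinates: hy
        have h2 : ev n (y - Hs (P (Hinv (E y)))) = 0 := congrFun hy ⟨n, hn⟩
        rw [ev_apply, lp.coeFn_sub, Pi.sub_apply, sub_eq_zero] at h2
        exact h2.symm
      · -- large coordinates: (Hs (P u)) n = (H u) n = y n
        set u := Hinv (E y) with hu
        have h1 : (Hs (P u) : ∀ _ : ℕ, V) n = (H (E (P u)) : ∀ _ : ℤ, V) (n : ℤ) :=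
          (keyA (P u) n).symm
        have h2 : H u = E y := by rw [hu, hHHinv]
        have h3 : (H (u - E (P u)) : ∀ _ : ℤ, V) (n : ℤ) = 0 := by
          rw [hH]
          refine Finset.sum_eq_zero fun j hj => ?_
          rw [Finset.mem_Icc] at hj
          have hnj : 0 ≤ (n : ℤ) - j := by omega
          rw [lp.coeFn_sub, Pi.sub_apply, E_apply, if_pos hnj, P_apply,
            Int.toNat_of_nonneg hnj, sub_self, map_zero]
        rw [map_sub, lp.coeFn_sub, Pi.sub_apply, sub_eq_zero] at h3
        rw [h1, ← h3, h2, E_apply, if_pos (Int.natCast_nonneg n)]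
        simp
    have hθq : FiniteDimensional ℂ (lp (fun _ : ℕ => V) 2 ⧸ LinearMap.ker θ) :=
      LinearEquiv.finiteDimensional θ.quotKerEquivRange.symm
    exact Module.Finite.of_surjective
      (Submodule.mapQ (LinearMap.ker θ)
        (LinearMap.range (Hs : lp (fun _ : ℕ => V) 2 →ₗ[ℂ] lp (fun _ : ℕ => V) 2))
        LinearMap.id hle)
      (fun z => by
        obtain ⟨y, rfl⟩ := Submodule.Quotient.mk_surjective _ z
        exact ⟨Submodule.Quotient.mk y, rfl⟩)
  exact ⟨hker, hcoker⟩
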